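/- Let c be a natural number, let w be a Gauss word of length 2c, and let j, j' : Fin (2c) be distinct positions. Then there exists an assignment x with step_j(x) ≠ step_{j'}(x), where step_b(x) = d_{b+1}(x) − d_b(x) (indices mod 2c). In other words, no two columns of the ±1 step matrix of the warping matrix are equal. -/
import Mathlib


namespace Warping

/-- A Gauss word of length `2c`: every letter occurs at exactly two positions. -/
def IsGaussWord (c : ℕ) (w : Fin (2*c) → Fin c) : Prop :=
  ∀ i : Fin c, (Finset.univ.filter (fun j => w j = i)).card = 2

/-- The cyclic successor of an index. -/
def next {n : ℕ} (b : Fin n) : Fin n :=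
  ⟨((b : ℕ) + 1) % n, Nat.mod_lt _ (Nat.lt_of_le_of_lt (Nat.zero_le _) b.isLt)⟩

/-- `j` is the first (smaller) of the two positions of its letter. -/
def isFirst (c : ℕ) (w : Fin (2*c) → Fin c) (j : Fin (2*c)) : Prop :=
  ∀ j' : Fin (2*c), w j' = w j → j ≤ j'

/-- Under the assignment `x`, position `j` is passed under. -/
def passedUnder (c : ℕ) (w : Fin (2*c) → Fin c) (x : Fin c → Bool) (j : Fin (2*c)) : Prop :=
  (x (w j) = true) ↔ isFirst c w j

/-- Time at which position `j` is met in the cyclic traversal starting at base `b`. -/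
def time (c : ℕ) (b j : Fin (2*c)) : ℕ := ((j : ℕ) + 2*c - (b : ℕ)) % (2*c)

/-- The letter `i` is a warping crossing for assignment `x` and base `b`: the position of `i`
met earlier in the cyclic traversal starting at `b` is passed under. -/
def IsWarpingCrossing (c : ℕ) (w : Fin (2*c) → Fin c) (x : Fin c → Bool)
    (b : Fin (2*c)) (i : Fin c) : Prop :=
  ∃ j : Fin (2*c), w j = i ∧ (∀ j' : Fin (2*c), w j' = i → time c b j ≤ time c b j') ∧
    passedUnder c w x j

open scoped Classical in
/-- The warping degree of the assignment `x` with base point `b`. -/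
noncomputable def warpingDegree (c : ℕ) (w : Fin (2*c) → Fin c) (x : Fin c → Bool)
    (b : Fin (2*c)) : ℕ :=
  (Finset.univ.filter (fun i => IsWarpingCrossing c w x b i)).card

/-- The step `d_{b+1}(x) - d_b(x)` of the warping degree sequence. -/
noncomputable def step (c : ℕ) (w : Fin (2*c) → Fin c) (x : Fin c → Bool) (b : Fin (2*c)) : ℤ :=
  (warpingDegree c w x (next b) : ℤ) - (warpingDegree c w x b : ℤ)

lemma time_lt (c : ℕ) (b j : Fin (2*c)) : time c b j < 2*c :=
  Nat.mod_lt _ (Nat.lt_of_le_of_lt (Nat.zero_le _) b.isLt)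

lemma base_add_time (c : ℕ) (b j : Fin (2*c)) : ((b : ℕ) + time c b j) % (2*c) = (j : ℕ) := by
  have hb : (b : ℕ) < 2*c := b.isLt
  have hj : (j : ℕ) < 2*c := j.isLt
  unfold time
  rw [Nat.add_mod_mod]
  have h1 : (b : ℕ) + ((j : ℕ) + 2*c - (b : ℕ)) = (j : ℕ) + 2*c := by omega
  rw [h1, Nat.add_mod_right, Nat.mod_eq_of_lt hj]

lemma time_unique (c : ℕ) (b j : Fin (2*c)) (t : ℕ) (ht : t < 2*c)
    (h : ((b : ℕ) + t) % (2*c) = (j : ℕ)) : time c b j = t := by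
  have hb : (b : ℕ) < 2*c := b.isLt
  unfold time
  rcases Nat.lt_or_ge ((b : ℕ) + t) (2*c) with hlt | hge
  · rw [Nat.mod_eq_of_lt hlt] at h
    have h1 : (j : ℕ) + 2*c - (b : ℕ) = t + 2*c := by omega
    rw [h1, Nat.add_mod_right, Nat.mod_eq_of_lt ht]
  · have h2 : ((b : ℕ) + t) % (2*c) = (b : ℕ) + t - 2*c := by
      rw [Nat.mod_eq_sub_mod hge, Nat.mod_eq_of_lt (by omega)]
    rw [h2] at h
    have h1 : (j : ℕ) + 2*c - (b : ℕ) = t := by omega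
    rw [h1, Nat.mod_eq_of_lt ht]

lemma time_self (c : ℕ) (b : Fin (2*c)) : time c b b = 0 := by
  apply time_unique c b b 0 (Nat.lt_of_le_of_lt (Nat.zero_le _) b.isLt)
  simp [Nat.mod_eq_of_lt b.isLt]

lemma time_inj (c : ℕ) (b j j' : Fin (2*c)) (h : time c b j = time c b j') : j = j' := by
  have h1 := base_add_time c b j
  have h2 := base_add_time c b j'
  rw [h] at h1
  exact Fin.ext (h1 ▸ h2 ▸ rfl)

lemma time_next_self (c : ℕ) (b : Fin (2*c)) : time c (next b) b = 2*c - 1 := by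
  have hb : (b : ℕ) < 2*c := b.isLt
  apply time_unique c (next b) b (2*c - 1) (by omega)
  show (((b : ℕ) + 1) % (2*c) + (2*c - 1)) % (2*c) = (b : ℕ)
  rw [Nat.mod_add_mod]
  have h1 : (b : ℕ) + 1 + (2*c - 1) = (b : ℕ) + 2*c := by omega
  rw [h1, Nat.add_mod_right, Nat.mod_eq_of_lt hb]

lemma time_next_of_ne (c : ℕ) (b j : Fin (2*c)) (h : j ≠ b) :
    time c (next b) j + 1 = time c b j := by
  have hb : (b : ℕ) < 2*c := b.isLt
  have ht := base_add_time c b j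
  have htlt := time_lt c b j
  have ht0 : time c b j ≠ 0 := by
    intro h0
    apply h
    rw [h0] at ht
    simp [Nat.mod_eq_of_lt hb] at ht
    exact Fin.ext ht.symm
  have := time_unique c (next b) j (time c b j - 1) (by omega) ?_
  · omega
  · show (((b : ℕ) + 1) % (2*c) + (time c b j - 1)) % (2*c) = (j : ℕ)
    rw [Nat.mod_add_mod]
    have h1 : (b : ℕ) + 1 + (time c b j - 1) = (b : ℕ) + time c b j := by omega
    rw [h1, ht]

/-- Each position `b` has a unique partner `b'` with the same letter. -/
lemma exists_partner (c : ℕ) (w : Fin (2*c) → Fin c) (hw : IsGaussWord c w) (b : Fin (2*c)) :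
    ∃ b' : Fin (2*c), b' ≠ b ∧ w b' = w b ∧ ∀ j : Fin (2*c), w j = w b → j = b ∨ j = b' := by
  classical
  obtain ⟨a, a', hne, hset⟩ := Finset.card_eq_two.mp (hw (w b))
  have hb : b ∈ Finset.univ.filter (fun j => w j = (w b)) := by simp
  rw [hset] at hb
  simp only [Finset.mem_insert, Finset.mem_singleton] at hb
  have hmem : ∀ j : Fin (2*c), w j = w b → j = a ∨ j = a' := by
    intro j hj
    have : j ∈ Finset.univ.filter (fun k => w k = (w b)) := by simp [hj]
    rw [hset] at this
    simpa using this
  have hwa : w a = w b := by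
    have : a ∈ ({a, a'} : Finset (Fin (2*c))) := by simp
    rw [← hset] at this; simpa using this
  have hwa' : w a' = w b := by
    have : a' ∈ ({a, a'} : Finset (Fin (2*c))) := by simp
    rw [← hset] at this; simpa using this
  rcases hb with rfl | rfl
  · exact ⟨a', hne.symm, hwa', fun j hj => hmem j hj⟩
  · exact ⟨a, hne, hwa, fun j hj => (hmem j hj).symm⟩

lemma isFirst_compl (c : ℕ) (w : Fin (2*c) → Fin c) (b b' : Fin (2*c)) (hne : b' ≠ b)
    (hwb : w b' = w b) (hpair : ∀ j : Fin (2*c), w j = w b → j = b ∨ j = b') :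
    isFirst c w b ↔ ¬ isFirst c w b' := by
  constructor
  · intro h1 h2
    exact hne (le_antisymm (h2 b (by rw [hwb])) (h1 b' hwb))
  · intro h2
    have hble : b ≤ b' := by
      by_contra hlt
      apply h2
      intro j hj
      rcases hpair j (by rw [← hwb]; exact hj) with rfl | rfl
      · omega
      · exact le_refl _
    intro j hj
    rcases hpair j hj with rfl | rfl
    · exact le_refl _
    · exact hble

lemma crossing_base (c : ℕ) (w : Fin (2*c) → Fin c) (x : Fin c → Bool) (b : Fin (2*c)) :
    IsWarpingCrossing c w x b (w b) ↔ passedUnder c w x b := by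
  constructor
  · rintro ⟨j, hj, hmin, hpu⟩
    have h0 := hmin b rfl
    rw [time_self] at h0
    have : j = b := time_inj c b j b (by rw [time_self]; omega)
    rwa [this] at hpu
  · intro hpu
    exact ⟨b, rfl, fun j' _ => by rw [time_self]; exact Nat.zero_le _, hpu⟩

lemma crossing_next (c : ℕ) (w : Fin (2*c) → Fin c) (x : Fin c → Bool) (b b' : Fin (2*c))
    (hne : b' ≠ b) (hwb : w b' = w b)
    (hpair : ∀ j : Fin (2*c), w j = w b → j = b ∨ j = b') :
    IsWarpingCrossing c w x (next b) (w b) ↔ passedUnder c w x b' := by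
  have hkey : time c (next b) b' < time c (next b) b := by
    have h1 := time_next_of_ne c b b' hne
    have h2 := time_next_self c b
    have h3 := time_lt c b b'
    omega
  constructor
  · rintro ⟨j, hj, hmin, hpu⟩
    rcases hpair j hj with rfl | rfl
    · exact absurd (hmin b' hwb) (by omega)
    · exact hpu
  · intro hpu
    refine ⟨b', hwb, fun j' hj' => ?_, hpu⟩
    rcases hpair j' hj' with rfl | rfl
    · omega
    · exact le_refl _

lemma crossing_other (c : ℕ) (w : Fin (2*c) → Fin c) (x : Fin c → Bool) (b : Fin (2*c))
    (i : Fin c) (hib : i ≠ w b) :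
    IsWarpingCrossing c w x b i ↔ IsWarpingCrossing c w x (next b) i := by
  have hne : ∀ j : Fin (2*c), w j = i → j ≠ b := by
    rintro j hj rfl; exact hib hj.symm
  constructor
  · rintro ⟨j, hj, hmin, hpu⟩
    refine ⟨j, hj, fun j' hj' => ?_, hpu⟩
    have h1 := time_next_of_ne c b j (hne j hj)
    have h2 := time_next_of_ne c b j' (hne j' hj')
    have := hmin j' hj'
    omega
  · rintro ⟨j, hj, hmin, hpu⟩
    refine ⟨j, hj, fun j' hj' => ?_, hpu⟩
    have h1 := time_next_of_ne c b j (hne j hj)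
    have h2 := time_next_of_ne c b j' (hne j' hj')
    have := hmin j' hj'
    omega

open scoped Classical in
lemma degree_split (c : ℕ) (w : Fin (2*c) → Fin c) (x : Fin c → Bool) (b : Fin (2*c))
    (i : Fin c) :
    warpingDegree c w x b =
      ((Finset.univ.erase i).filter (IsWarpingCrossing c w x b)).card +
        (if IsWarpingCrossing c w x b i then 1 else 0) := by
  classical
  rw [warpingDegree]
  conv_lhs => rw [show (Finset.univ : Finset (Fin c)) = insert i (Finset.univ.erase i) from
    (Finset.insert_erase (Finset.mem_univ _)).symm]
  rw [Finset.filter_insert]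
  split
  · rw [Finset.card_insert_of_notMem (by simp)]
  · rw [Nat.add_zero]

open scoped Classical in
/-- The key formula: the step at `b` is `-1` if `b` is passed under, `1` otherwise. -/
lemma step_eq (c : ℕ) (w : Fin (2*c) → Fin c) (hw : IsGaussWord c w) (x : Fin c → Bool)
    (b : Fin (2*c)) :
    step c w x b = if passedUnder c w x b then -1 else 1 := by
  classical
  obtain ⟨b', hne, hwb, hpair⟩ := exists_partner c w hw b
  rw [step, degree_split c w x b (w b), degree_split c w x (next b) (w b)]
  have hfil : ((Finset.univ.erase (w b)).filter (IsWarpingCrossing c w x (next b))) =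
      ((Finset.univ.erase (w b)).filter (IsWarpingCrossing c w x b)) := by
    apply Finset.filter_congr
    intro i hi
    simp only [Finset.mem_erase] at hi
    exact (crossing_other c w x b i hi.1).symm
  rw [hfil]
  simp only [crossing_base, crossing_next c w x b b' hne hwb hpair]
  have hcompl : passedUnder c w x b ↔ ¬ passedUnder c w x b' := by
    unfold passedUnder
    rw [hwb, isFirst_compl c w b b' hne hwb hpair]
    tauto
  by_cases h : passedUnder c w x b
  · rw [if_pos h, if_pos h, if_neg (hcompl.mp h)]
    push_cast; ring
  · rw [if_neg h, if_neg h, if_pos (not_not.mp (fun h2 => h (hcompl.mpr h2)))]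
    push_cast; ring

/-- No two columns of the ±1 step matrix of the warping matrix are equal: distinct positions
are distinguished by the step of some assignment. -/
theorem exists_step_ne (c : ℕ) (w : Fin (2*c) → Fin c) (hw : IsGaussWord c w)
    (j j' : Fin (2*c)) (hjj' : j ≠ j') :
    ∃ x : Fin c → Bool, step c w x j ≠ step c w x j' := by
  classical
  by_cases h : w j' = w j
  · -- same letter: any assignment works, steps are opposite signs
    refine ⟨fun _ => true, ?_⟩
    set x : Fin c → Bool := fun _ => true
    obtain ⟨b', hne, hwb, hpair⟩ := exists_partner c w hw j
    have hj' : j' = b' := by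
      rcases hpair j' h with h1 | h1
      · exact absurd h1 hjj'.symm
      · exact h1
    subst hj'
    have hcompl : passedUnder c w x j ↔ ¬ passedUnder c w x j' := by
      unfold passedUnder
      rw [hwb, isFirst_compl c w j j' hne hwb hpair]
      tauto
    rw [step_eq c w hw x j, step_eq c w hw x j']
    by_cases hp : passedUnder c w x j
    · rw [if_pos hp, if_neg (hcompl.mp hp)]; decide
    · rw [if_neg hp, if_pos (not_not.mp (fun h2 => hp (hcompl.mpr h2)))]; decide
  · -- different letters: choose the assignment independently at the two letters
    refine ⟨fun i => if i = w j then (if isFirst c w j then true else false)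
      else (if isFirst c w j' then false else true), ?_⟩
    set x : Fin c → Bool := fun i => if i = w j then (if isFirst c w j then true else false)
      else (if isFirst c w j' then false else true) with hx
    have hpj : passedUnder c w x j := by
      unfold passedUnder
      rw [hx]
      simp only [if_pos rfl]
      by_cases hf : isFirst c w j <;> simp [hf]
    have hpj' : ¬ passedUnder c w x j' := by
      unfold passedUnder
      rw [hx]
      simp only [if_neg h]
      by_cases hf : isFirst c w j' <;> simp [hf]
    rw [step_eq c w hw x j, step_eq c w hw x j', if_pos hpj, if_neg hpj']
    decide

end Warping
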